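/- Fourth modular identity for the Jacobi theta functions θ₄ and θ₂ (real form): for every real t > 0 and every real z, √t · ∑_{n∈ℤ} (-1)^n · exp(-πn²t) · cos(2nz) = ∑_{n∈ℤ} exp(-(z+π(n+1/2))²/(πt)). -/

import Mathlib

open Real

open Complex in
private lemma theta4_aux (t z : ℝ) (ht : 0 < t) :
    Real.sqrt t *
      ∑' n : ℤ, (-1 : ℝ) ^ n * Real.exp (-π * (n : ℝ) ^ 2 * t) * Real.cos (2 * (n : ℝ) * z)
    = ∑' n : ℤ, Real.exp (-π / t * ((n : ℝ) - (π + 2 * z) / (2 * π)) ^ 2) := by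
  have hπ : (0:ℝ) < π := Real.pi_pos
  set b : ℂ := Complex.I * ((π : ℂ) + 2 * z) / (2 * π) with hb
  set f : ℤ → ℂ := fun n ↦ cexp (-π * t * (n:ℂ) ^ 2 + 2 * π * b * n) with hf
  have hπc : (π : ℂ) ≠ 0 := Complex.ofReal_ne_zero.mpr hπ.ne'
  have hfe : ∀ n : ℤ, f n = cexp ((-π * t * (n:ℝ)^2 : ℝ) + ((n:ℝ) * (π + 2*z) : ℝ) * Complex.I) := by
    intro n
    refine congrArg cexp ?_
    push_cast [hb]
    field_simp
  have hsum : Summable f := by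
    have := (summable_jacobiTheta₂_term_iff (((π + 2*z)/(2*π) : ℝ) : ℂ) (Complex.I * t)).mpr
      (by simpa using ht)
    apply this.congr
    intro n
    rw [jacobiTheta₂_term, hfe]
    refine congrArg cexp ?_
    push_cast
    field_simp
    ring_nf
    rw [Complex.I_sq]
    ring
  have key := Complex.tsum_exp_neg_quadratic (a := (t:ℂ)) (by simpa using ht) b
  -- rewrite RHS terms of key as real
  have hIb : Complex.I * b = ((-(π + 2*z)/(2*π) : ℝ) : ℂ) := by
    rw [hb]
    have : (π : ℂ) ≠ 0 := Complex.ofReal_ne_zero.mpr hπ.ne'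
    push_cast
    field_simp
    linear_combination ((π:ℂ) + 2*z) * Complex.I_sq
  have hrhs : ∀ n : ℤ, cexp (-π / t * ((n:ℂ) + Complex.I * b) ^ 2)
      = ((Real.exp (-π / t * ((n : ℝ) - (π + 2 * z) / (2 * π)) ^ 2) : ℝ) : ℂ) := by
    intro n
    rw [hIb, Complex.ofReal_exp]
    congr 1
    push_cast
    ring
  have hardt : ((t:ℂ) ^ (1/2 : ℂ)) = ((Real.sqrt t : ℝ) : ℂ) := by
    rw [Real.sqrt_eq_rpow, Complex.ofReal_cpow ht.le]
    norm_num
  -- take real parts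
  have hre : (∑' n : ℤ, f n).re
      = ∑' n : ℤ, (-1 : ℝ) ^ n * Real.exp (-π * (n : ℝ) ^ 2 * t) * Real.cos (2 * (n : ℝ) * z) := by
    rw [Complex.re_tsum hsum]
    congr 1 with n
    rw [hfe, Complex.exp_re]
    simp only [Complex.add_re, Complex.ofReal_re, Complex.mul_re, Complex.I_re, Complex.I_im,
      Complex.ofReal_im, Complex.add_im, Complex.mul_im]
    ring_nf
    rw [show π * (n:ℝ) + (n:ℝ) * z * 2 = (n:ℝ) * z * 2 + (n:ℝ) * π by ring,
      Real.cos_add_int_mul_pi]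
    ring
  have h1 : (∑' n : ℤ, f n) = (((Real.sqrt t)⁻¹ *
      ∑' n : ℤ, Real.exp (-π / t * ((n : ℝ) - (π + 2 * z) / (2 * π)) ^ 2) : ℝ) : ℂ) := by
    refine key.trans ?_
    rw [tsum_congr hrhs, ← Complex.ofReal_tsum, hardt, Complex.ofReal_mul, one_div,
      Complex.ofReal_inv]
  have key2 : (∑' n : ℤ, f n).re = (Real.sqrt t)⁻¹ *
      ∑' n : ℤ, Real.exp (-π / t * ((n : ℝ) - (π + 2 * z) / (2 * π)) ^ 2) := by
    rw [h1, Complex.ofReal_re]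
  rw [← hre, key2, ← mul_assoc, mul_inv_cancel₀ (Real.sqrt_ne_zero'.mpr ht), one_mul]

/-- Fourth modular identity for the Jacobi theta functions `θ₄` and `θ₂`, real form. -/
theorem theta4_modular (t z : ℝ) (ht : 0 < t) :
    Real.sqrt t *
      ∑' n : ℤ, (-1 : ℝ) ^ n * Real.exp (-π * (n : ℝ) ^ 2 * t) * Real.cos (2 * (n : ℝ) * z)
    = ∑' n : ℤ, Real.exp (-(z + π * ((n : ℝ) + 1 / 2)) ^ 2 / (π * t)) := by
  rw [theta4_aux t z ht, ← (Equiv.neg ℤ).tsum_eq]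
  congr 1 with n
  have hπ : (0:ℝ) < π := Real.pi_pos
  congr 1
  field_simp
  simp only [Equiv.neg_apply, Int.cast_neg]
  ring
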